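/- For all integers n ≥ 1 and 1 ≤ k ≤ n, and every v ∈ ℝ^n, if h is uniformly distributed on {−1,1}^n, then E[⟨h,v⟩^{2k}] ≥ (k/(4n))^k · ‖v‖₁^{2k}. -/

import Mathlib

open Finset Nat

namespace Stmt7

noncomputable def sg (b : Bool) : ℝ := if b then 1 else -1

noncomputable def M (n k : ℕ) : ℝ := ∑ h : Fin n → Bool, (∑ i, sg (h i)) ^ (2 * k)

def D (k : ℕ) : ℕ := ∏ i ∈ range k, (2 * i + 1)

lemma sg_not (b : Bool) : sg (!b) = - sg b := by cases b <;> simp [sg]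

lemma M_nonneg (n k : ℕ) : 0 ≤ M n k := by
  apply Finset.sum_nonneg
  intro h _
  rw [pow_mul]
  positivity

lemma M_zero (n : ℕ) : M n 0 = 2 ^ n := by
  simp only [M, mul_zero, pow_zero, Finset.sum_const, Finset.card_univ, nsmul_eq_mul, mul_one]
  rw [Fintype.card_fun]
  simp

lemma key (k : ℕ) (hk : 1 ≤ k) (x : ℝ) :
    2 * x ^ (2 * k) + 2 * ((2 * k).choose 2) * x ^ (2 * (k - 1)) ≤
      (x + 1) ^ (2 * k) + (x - 1) ^ (2 * k) := by
  have h1 : (x + 1) ^ (2 * k)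
      = ∑ i ∈ range (2 * k + 1), x ^ i * 1 ^ (2 * k - i) * ((2 * k).choose i) :=
    add_pow x 1 (2 * k)
  have h2 : (x - 1) ^ (2 * k)
      = ∑ i ∈ range (2 * k + 1), x ^ i * (-1) ^ (2 * k - i) * ((2 * k).choose i) := by
    rw [sub_eq_add_neg]
    exact add_pow x (-1) (2 * k)
  rw [h1, h2, ← Finset.sum_add_distrib]
  set f : ℕ → ℝ := fun i =>
    x ^ i * 1 ^ (2 * k - i) * ((2 * k).choose i) + x ^ i * (-1) ^ (2 * k - i) * ((2 * k).choose i)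
    with hf
  have hnonneg : ∀ i ∈ range (2 * k + 1), 0 ≤ f i := by
    intro i hi
    rw [Finset.mem_range] at hi
    rcases Nat.even_or_odd i with he | ho
    · have hx : (0:ℝ) ≤ x ^ i := he.pow_nonneg x
      obtain ⟨j, hj⟩ := he
      have h2e : Even (2 * k - i) := ⟨k - j, by omega⟩
      have hneg : ((-1 : ℝ)) ^ (2 * k - i) = 1 := h2e.neg_one_pow
      rw [hf]
      simp only [hneg, one_pow, one_mul]
      have hc : (0:ℝ) ≤ ((2*k).choose i : ℝ) := by positivity
      nlinarith
    · obtain ⟨j, hj⟩ := ho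
      have h2o : Odd (2 * k - i) := ⟨k - j - 1, by omega⟩
      have hneg : ((-1 : ℝ)) ^ (2 * k - i) = -1 := h2o.neg_one_pow
      rw [hf]
      simp only [hneg, one_pow, one_mul]
      ring_nf
      exact le_refl 0
  have hsub : ({2 * (k-1), 2 * k} : Finset ℕ) ⊆ range (2 * k + 1) := by
    intro i hi
    simp only [Finset.mem_insert, Finset.mem_singleton] at hi
    rw [Finset.mem_range]
    omega
  have hpair : ∑ i ∈ ({2 * (k-1), 2 * k} : Finset ℕ), f i ≤ ∑ i ∈ range (2 * k + 1), f i :=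
    Finset.sum_le_sum_of_subset_of_nonneg hsub (fun i hi _ => hnonneg i hi)
  have hne : 2 * (k-1) ≠ 2 * k := by omega
  rw [Finset.sum_insert (by simp [hne]), Finset.sum_singleton] at hpair
  have e1 : f (2 * k) = 2 * x ^ (2 * k) := by
    simp only [hf]
    simp [Nat.choose_self]
    ring
  have e2 : f (2 * (k-1)) = 2 * ((2 * k).choose 2) * x ^ (2 * (k - 1)) := by
    simp only [hf]
    have hs : 2 * k - 2 * (k - 1) = 2 := by omega
    have hch : (2 * k).choose (2 * (k-1)) = (2 * k).choose 2 := by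
      have : 2 * (k - 1) = 2 * k - 2 := by omega
      rw [this, Nat.choose_symm (by omega)]
    rw [hs, hch]
    norm_num
    ring
  rw [e1, e2] at hpair
  linarith

lemma M_succ (n k : ℕ) (hk : 1 ≤ k) :
    2 * M n k + 2 * ((2 * k).choose 2) * M n (k - 1) ≤ M (n + 1) k := by
  have hdec : M (n+1) k = ∑ p : Bool × (Fin n → Bool), (sg p.1 + ∑ i, sg (p.2 i)) ^ (2*k) := by
    rw [M]
    apply Fintype.sum_equiv (Fin.consEquiv (fun _ : Fin (n+1) => Bool)).symm
    intro h
    congr 1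
    rw [Fin.sum_univ_succ]
    rfl
  rw [hdec, Fintype.sum_prod_type, Fintype.sum_bool]
  rw [← Finset.sum_add_distrib]
  have step : ∀ h : Fin n → Bool,
      2 * (∑ i, sg (h i)) ^ (2*k) + 2 * ((2 * k).choose 2) * (∑ i, sg (h i)) ^ (2*(k-1)) ≤
      (sg true + ∑ i, sg (h i)) ^ (2*k) + (sg false + ∑ i, sg (h i)) ^ (2*k) := by
    intro h
    have ht : sg true = 1 := rfl
    have hft : sg false = -1 := rfl
    rw [ht, hft]
    have h1 : (1 + ∑ i, sg (h i)) = (∑ i, sg (h i)) + 1 := by ring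
    have h2 : (-1 + ∑ i, sg (h i)) = (∑ i, sg (h i)) - 1 := by ring
    rw [h1, h2]
    exact key k hk _
  calc 2 * M n k + 2 * ((2 * k).choose 2) * M n (k - 1)
      = ∑ h : Fin n → Bool, (2 * (∑ i, sg (h i)) ^ (2*k)
          + 2 * ((2 * k).choose 2) * (∑ i, sg (h i)) ^ (2*(k-1))) := by
        rw [Finset.sum_add_distrib, ← Finset.mul_sum, ← Finset.mul_sum]
        rfl
    _ ≤ ∑ h : Fin n → Bool, ((sg true + ∑ i, sg (h i)) ^ (2*k)
          + (sg false + ∑ i, sg (h i)) ^ (2*k)) :=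
        Finset.sum_le_sum (fun h _ => step h)

lemma Dfact : ∀ k : ℕ, 2 ^ k * k ! * D k = (2 * k) !
  | 0 => rfl
  | (k+1) => by
    have h1 : D (k+1) = D k * (2 * k + 1) := by rw [D, Finset.prod_range_succ]; rfl
    have h2 : 2 * (k + 1) = (2 * k + 1) + 1 := by ring
    rw [h1, h2, Nat.factorial_succ (2*k+1), Nat.factorial_succ (2*k), ← Dfact k,
      Nat.factorial_succ k]
    ring

lemma choose_two (j : ℕ) : (2 * (j+1)).choose 2 = (j+1) * (2 * j + 1) := by
  rw [Nat.choose_two_right]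
  have h1 : 2 * (j+1) - 1 = 2 * j + 1 := by omega
  rw [h1]
  have h2 : 2 * (j + 1) * (2 * j + 1) = 2 * ((j+1) * (2*j+1)) := by ring
  rw [h2, Nat.mul_div_cancel_left _ (by norm_num)]

lemma Tid (n j : ℕ) :
    D (j+1) * (j+1) ! * ((n+1).choose (j+1)) =
      D (j+1) * (j+1) ! * (n.choose (j+1)) + (2*(j+1)).choose 2 * (D j * j ! * (n.choose j)) := by
  rw [Nat.choose_succ_succ, choose_two]
  have h1 : D (j+1) = D j * (2 * j + 1) := by rw [D, Finset.prod_range_succ]; rfl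
  rw [h1, Nat.factorial_succ]
  ring

lemma M_ge : ∀ n k : ℕ, (2:ℝ)^n * ((D k : ℝ) * (k ! : ℝ) * (n.choose k : ℝ)) ≤ M n k := by
  intro n
  induction n with
  | zero =>
    intro k
    cases k with
    | zero => simp [M, D]
    | succ j =>
      rw [Nat.choose_zero_succ]
      norm_num
      exact M_nonneg 0 (j+1)
  | succ n ih =>
    intro k
    cases k with
    | zero =>
      rw [M_zero]
      simp [D]
    | succ j =>
      have hrec := M_succ n (j+1) (by omega)
      have h1 := ih (j+1)
      have h2 := ih j
      have hsimp : (j + 1) - 1 = j := by omega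
      rw [hsimp] at hrec
      have hT := Tid n j
      have hTr : ((D (j+1) * (j+1) ! * ((n+1).choose (j+1)) : ℕ) : ℝ) =
          (D (j+1) : ℝ) * ((j+1) ! : ℝ) * (((n.choose (j+1))) : ℝ)
          + ((2*(j+1)).choose 2 : ℝ) * ((D j : ℝ) * (j ! : ℝ) * ((n.choose j) : ℝ)) := by
        rw [hT]; push_cast; ring
      have hgoal : (2:ℝ)^(n+1) * ((D (j+1) : ℝ) * ((j+1) ! : ℝ) * (((n+1).choose (j+1)) : ℝ))
          = 2 * ((2:ℝ)^n * ((D (j+1) : ℝ) * ((j+1) ! : ℝ) * ((n.choose (j+1)) : ℝ)))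
            + 2 * ((2*(j+1)).choose 2 : ℝ)
              * ((2:ℝ)^n * ((D j : ℝ) * (j ! : ℝ) * ((n.choose j) : ℝ))) := by
        have := hTr
        push_cast at this ⊢
        linear_combination ((2:ℝ)^n * 2) * this
      rw [hgoal]
      calc 2 * ((2:ℝ)^n * ((D (j+1) : ℝ) * ((j+1) ! : ℝ) * ((n.choose (j+1)) : ℝ)))
            + 2 * ((2*(j+1)).choose 2 : ℝ)
              * ((2:ℝ)^n * ((D j : ℝ) * (j ! : ℝ) * ((n.choose j) : ℝ)))
          ≤ 2 * M n (j+1) + 2 * ((2*(j+1)).choose 2 : ℝ) * M n j := by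
            have ha : 2 * ((2:ℝ)^n * ((D (j+1) : ℝ) * ((j+1) ! : ℝ) * ((n.choose (j+1)) : ℝ)))
                ≤ 2 * M n (j+1) := by linarith
            have hb : 2 * ((2*(j+1)).choose 2 : ℝ)
                  * ((2:ℝ)^n * ((D j : ℝ) * (j ! : ℝ) * ((n.choose j) : ℝ)))
                ≤ 2 * ((2*(j+1)).choose 2 : ℝ) * M n j := by
              apply mul_le_mul_of_nonneg_left h2
              positivity
            linarith
        _ ≤ M (n+1) (j+1) := hrec

lemma pow_self_le (m : ℕ) : ((m+1 : ℝ)) ^ (m+1) ≤ ((m+1) ! : ℝ) * Real.exp 1 ^ m := by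
  induction m with
  | zero => simp
  | succ m ih =>
    have hm1 : (0:ℝ) < (m:ℝ) + 1 := by positivity
    have h3 : ((m+2:ℝ))/(m+1) ≤ Real.exp (1/(m+1)) := by
      have := Real.add_one_le_exp (1/((m:ℝ)+1))
      have heq : ((m+2:ℝ))/(m+1) = 1/((m:ℝ)+1) + 1 := by field_simp; ring
      rw [heq]
      exact this
    have h4 : (((m:ℝ)+2)/(m+1))^(m+1) ≤ Real.exp 1 := by
      calc (((m:ℝ)+2)/(m+1))^(m+1) ≤ (Real.exp (1/((m:ℝ)+1)))^(m+1) := by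
            apply pow_le_pow_left₀ (by positivity) h3
        _ = Real.exp 1 := by
            rw [← Real.exp_nat_mul]
            congr 1
            push_cast
            field_simp
    have h1 : ((m+2:ℝ)) ^ (m+1) ≤ ((m:ℝ)+1)^(m+1) * Real.exp 1 := by
      have h2 : ((m+2:ℝ)) ^ (m+1) = ((m+1:ℝ))^(m+1) * (((m:ℝ)+2)/(m+1))^(m+1) := by
        rw [← mul_pow]
        congr 1
        field_simp
      rw [h2]
      apply mul_le_mul_of_nonneg_left h4 (by positivity)
    have hexp : (0:ℝ) < Real.exp 1 := Real.exp_pos 1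
    have main : ((m+2:ℝ))^(m+2) ≤ ((m+2) ! : ℝ) * Real.exp 1 ^ (m+1) := by
      calc ((m+2:ℝ))^(m+2) = ((m:ℝ)+2) * ((m+2:ℝ))^(m+1) := by ring
        _ ≤ ((m:ℝ)+2) * (((m:ℝ)+1)^(m+1) * Real.exp 1) := by
            apply mul_le_mul_of_nonneg_left h1 (by positivity)
        _ ≤ ((m:ℝ)+2) * ((((m+1) ! : ℝ) * Real.exp 1 ^ m) * Real.exp 1) := by
            apply mul_le_mul_of_nonneg_left _ (by positivity)
            apply mul_le_mul_of_nonneg_right _ hexp.le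
            exact_mod_cast ih
        _ = ((m+2) ! : ℝ) * Real.exp 1 ^ (m+1) := by
            rw [Nat.factorial_succ (m+1)]
            push_cast
            ring
    calc ((↑(m+1) : ℝ) + 1) ^ (m+1+1) = ((m+2:ℝ))^(m+2) := by push_cast; ring
      _ ≤ ((m+2) ! : ℝ) * Real.exp 1 ^ (m+1) := main
      _ = ((m+1+1) ! : ℝ) * Real.exp 1 ^ (m+1) := by norm_num

lemma two_k_bound (k : ℕ) (hk : 1 ≤ k) : ((k:ℝ))^(2*k) ≤ 2^k * ((2*k) ! : ℝ) := by
  have hfact : (0:ℝ) ≤ ((2*k) ! : ℝ) := by positivity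
  obtain ⟨m, hm⟩ : ∃ m, 2*k = m+1 := ⟨2*k-1, by omega⟩
  have hc : 2*(k:ℝ) = (m:ℝ)+1 := by exact_mod_cast hm
  have h1 : (2*(k:ℝ)) ^ (2*k) ≤ ((2*k) ! : ℝ) * Real.exp 1 ^ m := by
    have h0 := pow_self_le m
    rw [← hm] at h0
    rwa [← hc] at h0
  have he1 : (1:ℝ) ≤ Real.exp 1 := by
    have := Real.add_one_le_exp (1:ℝ)
    linarith
  have he8 : Real.exp 1 ^ 2 ≤ 8 := by
    nlinarith [Real.exp_one_lt_d9]
  have h2 : Real.exp 1 ^ m ≤ 8^k := by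
    calc Real.exp 1 ^ m ≤ Real.exp 1 ^ (2*k) := by
          apply pow_le_pow_right₀ he1 (by omega)
      _ = (Real.exp 1 ^ 2)^k := by rw [← pow_mul]
      _ ≤ 8^k := by
          apply pow_le_pow_left₀ (by positivity) he8
  have h3 : (2*(k:ℝ))^(2*k) = 4^k * (k:ℝ)^(2*k) := by
    rw [mul_pow]
    congr 1
    rw [pow_mul]
    norm_num
  have h4 : (4:ℝ)^k * (k:ℝ)^(2*k) ≤ ((2*k) ! : ℝ) * 8^k := by
    rw [← h3]
    calc (2*(k:ℝ))^(2*k) ≤ ((2*k) ! : ℝ) * Real.exp 1 ^ m := h1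
      _ ≤ ((2*k) ! : ℝ) * 8^k := mul_le_mul_of_nonneg_left h2 hfact
  have h8 : (8:ℝ)^k = 4^k * 2^k := by
    rw [← mul_pow]; norm_num
  rw [h8] at h4
  have h4' : (4:ℝ)^k * (k:ℝ)^(2*k) ≤ 4^k * (2^k * ((2*k) ! : ℝ)) := by
    calc (4:ℝ)^k * (k:ℝ)^(2*k) ≤ ((2*k) ! : ℝ) * (4^k * 2^k) := h4
      _ = 4^k * (2^k * ((2*k) ! : ℝ)) := by ring
  exact le_of_mul_le_mul_left h4' (by positivity : (0:ℝ) < 4^k)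

lemma T_ge (n k : ℕ) (hk : 1 ≤ k) (hkn : k ≤ n) :
    ((k:ℝ) * n / 4) ^ k ≤ (D k : ℝ) * (k ! : ℝ) * (n.choose k : ℝ) := by
  have hk0 : (0:ℝ) < (k:ℝ) := by exact_mod_cast hk
  have hdesc : ((n.descFactorial k : ℕ) : ℝ) = ∏ i ∈ range k, ((n:ℝ) - i) := by
    rw [Nat.descFactorial_eq_prod_range]
    push_cast [Nat.cast_prod]
    apply Finset.prod_congr rfl
    intro i hi
    rw [Finset.mem_range] at hi
    rw [Nat.cast_sub (by omega)]
  have hfactprod : ((k !  : ℕ) : ℝ) = ∏ i ∈ range k, ((k:ℝ) - i) := by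
    have h := Nat.descFactorial_self k
    rw [← h, Nat.descFactorial_eq_prod_range]
    push_cast [Nat.cast_prod]
    apply Finset.prod_congr rfl
    intro i hi
    rw [Finset.mem_range] at hi
    rw [Nat.cast_sub (by omega)]
  have hprod : (n:ℝ)^k * (k ! : ℝ) ≤ (k:ℝ)^k * ((n.descFactorial k : ℕ) : ℝ) := by
    have hc1 : (n:ℝ)^k = ∏ _i ∈ range k, (n:ℝ) := by rw [Finset.prod_const, Finset.card_range]
    have hc2 : (k:ℝ)^k = ∏ _i ∈ range k, (k:ℝ) := by rw [Finset.prod_const, Finset.card_range]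
    rw [hdesc, hfactprod, hc1, hc2, ← Finset.prod_mul_distrib, ← Finset.prod_mul_distrib]
    apply Finset.prod_le_prod
    · intro i hi
      rw [Finset.mem_range] at hi
      have hik : (i:ℝ) + 1 ≤ (k:ℝ) := by exact_mod_cast hi
      have hn0 : (0:ℝ) ≤ (n:ℝ) := by positivity
      nlinarith
    · intro i hi
      rw [Finset.mem_range] at hi
      have hik : (i:ℝ) + 1 ≤ (k:ℝ) := by exact_mod_cast hi
      have hnk : (k:ℝ) ≤ (n:ℝ) := by exact_mod_cast hkn
      have hi0 : (0:ℝ) ≤ (i:ℝ) := by positivity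
      nlinarith
  have hdchoose : ((n.descFactorial k : ℕ) : ℝ) = (k ! : ℝ) * (n.choose k : ℝ) := by
    rw [Nat.descFactorial_eq_factorial_mul_choose]
    push_cast
    ring
  have hDfR : ((2*k) ! : ℝ) = 2^k * (k ! : ℝ) * (D k : ℝ) := by
    exact_mod_cast (Dfact k).symm
  rw [div_pow, div_le_iff₀ (by positivity : (0:ℝ) < 4^k)]
  have hmain : (k:ℝ)^k * (((k:ℝ) * n)^k)
      ≤ (k:ℝ)^k * ((D k : ℝ) * (k ! : ℝ) * (n.choose k : ℝ) * 4^k) := by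
    calc (k:ℝ)^k * (((k:ℝ) * n)^k) = (k:ℝ)^(2*k) * (n:ℝ)^k := by
          ring
      _ ≤ (2^k * ((2*k) ! : ℝ)) * (n:ℝ)^k := by
          apply mul_le_mul_of_nonneg_right (two_k_bound k hk) (by positivity)
      _ = ((n:ℝ)^k * (k ! : ℝ)) * (4^k * (D k : ℝ)) := by
          rw [hDfR, show (4:ℝ)^k = 2^k * 2^k by rw [← mul_pow]; norm_num]
          ring
      _ ≤ ((k:ℝ)^k * ((n.descFactorial k : ℕ) : ℝ)) * (4^k * (D k : ℝ)) := by
          apply mul_le_mul_of_nonneg_right hprod (by positivity)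
      _ = (k:ℝ)^k * ((D k : ℝ) * (k ! : ℝ) * (n.choose k : ℝ) * 4^k) := by
          rw [hdchoose]
          ring
  exact le_of_mul_le_mul_left hmain (by positivity : (0:ℝ) < (k:ℝ)^k)

lemma mask_invariant {n : ℕ} (k : ℕ) (v : Fin n → ℝ) :
    ∑ h : Fin n → Bool, (∑ i, sg (h i) * v i) ^ (2*k)
      = ∑ h : Fin n → Bool, (∑ i, sg (h i) * |v i|) ^ (2*k) := by
  have hinv : Function.Involutive
      (fun h : Fin n → Bool => fun i => xor (h i) (decide (v i < 0))) := by
    intro h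
    funext i
    simp
  apply Fintype.sum_bijective _ hinv.bijective
  intro h
  congr 1
  apply Finset.sum_congr rfl
  intro i _
  show sg (h i) * v i = sg (xor (h i) (decide (v i < 0))) * |v i|
  rcases lt_or_ge (v i) 0 with hv | hv
  · rw [abs_of_neg hv]
    have hd : decide (v i < 0) = true := by simp [hv]
    rw [hd, Bool.xor_true, sg_not]
    ring
  · rw [abs_of_nonneg hv]
    have : decide (v i < 0) = false := by simp [not_lt.mpr hv]
    rw [this, Bool.xor_false]

lemma perm_invariant {n : ℕ} (k : ℕ) (w : Fin n → ℝ) (π : Equiv.Perm (Fin n)) :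
    ∑ h : Fin n → Bool, (∑ i, sg (h i) * w (π i)) ^ (2*k)
      = ∑ h : Fin n → Bool, (∑ i, sg (h i) * w i) ^ (2*k) := by
  apply Fintype.sum_equiv (Equiv.arrowCongr π (Equiv.refl Bool))
  intro h
  congr 1
  rw [← Equiv.sum_comp π (fun i => sg ((Equiv.arrowCongr π (Equiv.refl Bool)) h i) * w i)]
  apply Finset.sum_congr rfl
  intro i _
  congr 2
  simp [Equiv.arrowCongr_apply]

lemma jensen_flat (k m : ℕ) (w : Fin (m+1) → ℝ) :
    ((∑ j, w j) / (m+1)) ^ (2*k) * M (m+1) k ≤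
      ∑ h : Fin (m+1) → Bool, (∑ i, sg (h i) * w i) ^ (2*k) := by
  set σ : ℝ := ∑ j, w j with hσ
  have hn0 : (0:ℝ) < (m+1 : ℝ) := by positivity
  have hrot : ∀ i : Fin (m+1), ∑ c : Fin (m+1), w (i + c) = σ := by
    intro i
    exact Equiv.sum_comp (Equiv.addLeft i) w
  have hJ : ∀ h : Fin (m+1) → Bool,
      (σ/(m+1))^(2*k) * (∑ i, sg (h i))^(2*k)
        ≤ (1/((m:ℝ)+1)) * ∑ c : Fin (m+1), (∑ i, sg (h i) * w (i + c))^(2*k) := by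
    intro h
    have hconv : ConvexOn ℝ Set.univ (fun x : ℝ => x ^ (2*k)) :=
      (even_two_mul k).convexOn_pow
    have hw0 : ∀ c ∈ (univ : Finset (Fin (m+1))), (0:ℝ) ≤ 1/((m:ℝ)+1) := by
      intro c _
      positivity
    have hw1 : ∑ _c : Fin (m+1), (1/((m:ℝ)+1)) = 1 := by
      rw [Finset.sum_const, Finset.card_univ, Fintype.card_fin]
      rw [nsmul_eq_mul]; push_cast
      field_simp
    have hmem : ∀ c ∈ (univ : Finset (Fin (m+1))),
        (∑ i, sg (h i) * w (i + c)) ∈ Set.univ := by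
      intro c _
      trivial
    have hjen := hconv.map_sum_le hw0 hw1 hmem
    have harg : ∑ c : Fin (m+1), (1/((m:ℝ)+1)) • (∑ i, sg (h i) * w (i + c))
        = (σ/(m+1)) * (∑ i, sg (h i)) := by
      simp only [smul_eq_mul]
      rw [← Finset.mul_sum]
      rw [Finset.sum_comm]
      have : ∀ i : Fin (m+1), ∑ c : Fin (m+1), sg (h i) * w (i + c) = sg (h i) * σ := by
        intro i
        rw [← Finset.mul_sum, hrot i]
      rw [Finset.sum_congr rfl (fun i _ => this i)]
      rw [← Finset.sum_mul]
      ring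
    rw [harg] at hjen
    calc (σ/(m+1))^(2*k) * (∑ i, sg (h i))^(2*k)
        = ((σ/(m+1)) * (∑ i, sg (h i)))^(2*k) := by rw [mul_pow]
      _ ≤ ∑ c : Fin (m+1), (1/((m:ℝ)+1)) • ((∑ i, sg (h i) * w (i + c))^(2*k)) := hjen
      _ = (1/((m:ℝ)+1)) * ∑ c : Fin (m+1), (∑ i, sg (h i) * w (i + c))^(2*k) := by
          simp only [smul_eq_mul]
          rw [← Finset.mul_sum]
  have hsum : ∑ h : Fin (m+1) → Bool, (σ/(m+1))^(2*k) * (∑ i, sg (h i))^(2*k)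
      ≤ ∑ h : Fin (m+1) → Bool,
          (1/((m:ℝ)+1)) * ∑ c : Fin (m+1), (∑ i, sg (h i) * w (i + c))^(2*k) :=
    Finset.sum_le_sum (fun h _ => hJ h)
  have hlhs : ∑ h : Fin (m+1) → Bool, (σ/(m+1))^(2*k) * (∑ i, sg (h i))^(2*k)
      = (σ/(m+1))^(2*k) * M (m+1) k := by
    rw [M, ← Finset.mul_sum]
  have hrhs : ∑ h : Fin (m+1) → Bool,
      (1/((m:ℝ)+1)) * ∑ c : Fin (m+1), (∑ i, sg (h i) * w (i + c))^(2*k)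
      = ∑ h : Fin (m+1) → Bool, (∑ i, sg (h i) * w i) ^ (2*k) := by
    rw [← Finset.mul_sum, Finset.sum_comm]
    have : ∀ c : Fin (m+1), ∑ h : Fin (m+1) → Bool, (∑ i, sg (h i) * w (i + c))^(2*k)
        = ∑ h : Fin (m+1) → Bool, (∑ i, sg (h i) * w i) ^ (2*k) := by
      intro c
      exact perm_invariant k w (Equiv.addRight c)
    rw [Finset.sum_congr rfl (fun c _ => this c)]
    rw [Finset.sum_const, Finset.card_univ, Fintype.card_fin]
    rw [nsmul_eq_mul]
    push_cast
    field_simp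
  rw [hlhs, hrhs] at hsum
  exact hsum

end Stmt7

/-- **Rademacher moment lower bound in every direction** (real-valued content of
Lemma `h-v-moment`): for `1 ≤ k ≤ n` and every `v ∈ ℝ^n`, a uniformly random sign
vector `h ∈ {±1}^n` satisfies `E[⟨h,v⟩^{2k}] ≥ (k/(4n))^k · ‖v‖₁^{2k}`. -/
theorem stmt_7 (n k : ℕ) (hn : 1 ≤ n) (hk : 1 ≤ k) (hkn : k ≤ n) (v : Fin n → ℝ) :
    ((k : ℝ) / (4 * n)) ^ k * (∑ i, |v i|) ^ (2 * k) ≤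
      (∑ h : Fin n → Bool, (∑ i, (if h i then (1 : ℝ) else -1) * v i) ^ (2 * k)) / 2 ^ n := by
  obtain ⟨m, rfl⟩ : ∃ m, n = m + 1 := ⟨n - 1, by omega⟩
  set σ : ℝ := ∑ i, |v i| with hσ
  have hA : (∑ h : Fin (m+1) → Bool, (∑ i, (if h i then (1:ℝ) else -1) * v i) ^ (2*k))
      = ∑ h : Fin (m+1) → Bool, (∑ i, Stmt7.sg (h i) * |v i|) ^ (2*k) := by
    rw [← Stmt7.mask_invariant k v]
    rfl
  rw [hA]
  rw [le_div_iff₀ (by positivity : (0:ℝ) < 2^(m+1))]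
  have hσnn : 0 ≤ σ := Finset.sum_nonneg (fun i _ => abs_nonneg _)
  have hpow_nn : (0:ℝ) ≤ (σ/((m:ℝ)+1))^(2*k) := by
    rw [pow_mul]
    positivity
  have hT' : ((k:ℝ) * ((m:ℝ)+1) / 4) ^ k
      ≤ (Stmt7.D k : ℝ) * (k ! : ℝ) * (((m+1).choose k) : ℝ) := by
    have h := Stmt7.T_ge (m+1) k hk hkn
    have he : ((k:ℝ) * ((m:ℝ)+1)/4)^k = ((k:ℝ) * (((m+1):ℕ):ℝ)/4)^k := by push_cast; ring
    rw [he]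
    exact h
  have hM := Stmt7.M_ge (m+1) k
  have hchain : (σ/((m:ℝ)+1))^(2*k) * ((2:ℝ)^(m+1) * (((k:ℝ) * ((m:ℝ)+1) / 4) ^ k))
      ≤ ∑ h : Fin (m+1) → Bool, (∑ i, Stmt7.sg (h i) * |v i|) ^ (2*k) := by
    calc (σ/((m:ℝ)+1))^(2*k) * ((2:ℝ)^(m+1) * (((k:ℝ) * ((m:ℝ)+1) / 4) ^ k))
        ≤ (σ/((m:ℝ)+1))^(2*k) * ((2:ℝ)^(m+1)
            * ((Stmt7.D k : ℝ) * (k ! : ℝ) * (((m+1).choose k) : ℝ))) :=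
          mul_le_mul_of_nonneg_left
            (mul_le_mul_of_nonneg_left hT' (by positivity)) hpow_nn
      _ ≤ (σ/((m:ℝ)+1))^(2*k) * Stmt7.M (m+1) k :=
          mul_le_mul_of_nonneg_left hM hpow_nn
      _ ≤ ∑ h : Fin (m+1) → Bool, (∑ i, Stmt7.sg (h i) * |v i|) ^ (2*k) := by
          exact Stmt7.jensen_flat k m (fun i => |v i|)
  have heq : ((k:ℝ)/(4 * ((m+1:ℕ):ℝ)))^k * σ^(2*k) * 2^(m+1)
      = (σ/((m:ℝ)+1))^(2*k) * ((2:ℝ)^(m+1) * (((k:ℝ) * ((m:ℝ)+1) / 4) ^ k)) := by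
    have hm0 : ((m:ℝ)+1) ≠ 0 := by positivity
    have hB : ((m:ℝ)+1)^k ≠ 0 := by positivity
    have hC : (4:ℝ)^k ≠ 0 := by positivity
    push_cast
    rw [div_pow ((k:ℝ)) (4 * ((m:ℝ)+1)) k, mul_pow (4:ℝ) ((m:ℝ)+1) k,
      div_pow σ ((m:ℝ)+1) (2*k), div_pow ((k:ℝ) * ((m:ℝ)+1)) 4 k,
      mul_pow ((k:ℝ)) ((m:ℝ)+1) k,
      show ((m:ℝ)+1)^(2*k) = ((m:ℝ)+1)^k * ((m:ℝ)+1)^k by rw [two_mul, pow_add]]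
    field_simp
  rw [heq]
  exact hchain
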